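/- Let M be a finitely generated ℕ^r-graded module over S = K[x_1,…,x_r] and let p = ⟨x_1,…,x_k⟩ be an associated prime of M generated by the first k variables. Then H^0_p(M) is finitely generated as a module over the subring S_{c_p} = K[x_{k+1},…,x_r] of S. -/

import Mathlib

/-!
STATEMENT 11: Let `M` be a finitely generated ℕ^r-graded module over `S = K[x_1,…,x_r]`
and let `p = ⟨x_1,…,x_k⟩` (encoded as the span of the variables `x_i` with `i < k`)
be an associated prime of `M`.  Then the zeroth local cohomology
`H^0_p(M) = {m | ∃ n, p^n · m = 0}` is finitely generated as a module over the
subring `S_{c_p} = K[x_{k+1},…,x_r]` (the `K`-subalgebra generated by the variables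
`x_i` with `i ≥ k`): there is a finite set `G ⊆ H^0_p(M)` such that every element of
`H^0_p(M)` is an `S_{c_p}`-linear combination of elements of `G`.
-/

theorem statement11 (K : Type) [Field K] (r k : ℕ)
    (M : Type) [AddCommGroup M] [Module (MvPolynomial (Fin r) K) M]
    [Module K M] [IsScalarTower K (MvPolynomial (Fin r) K) M]
    [Module.Finite (MvPolynomial (Fin r) K) M]
    (ℳ : (Fin r →₀ ℕ) → Submodule K M)
    (hM : DirectSum.IsInternal ℳ)
    (hMgr : ∀ (u v : Fin r →₀ ℕ) (c : K) (m : M), m ∈ ℳ v →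
      (MvPolynomial.monomial u c) • m ∈ ℳ (u + v))
    -- p = ⟨x_1,…,x_k⟩ is an associated prime of M
    (p : Ideal (MvPolynomial (Fin r) K))
    (hpdef : p = Ideal.span {f | ∃ i : Fin r, (i : ℕ) < k ∧ f = MvPolynomial.X i})
    (hp : p.IsPrime)
    (hass : ∃ m : M, ∀ s : MvPolynomial (Fin r) K, s ∈ p ↔ s • m = 0) :
    ∃ G : Finset M,
      (∀ g ∈ G, ∃ n : ℕ, ∀ s ∈ p ^ n, s • g = 0) ∧
      ∀ m : M, (∃ n : ℕ, ∀ s ∈ p ^ n, s • m = 0) →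
        ∃ c : M → MvPolynomial (Fin r) K,
          (∀ g : M, c g ∈ Algebra.adjoin K
            {f : MvPolynomial (Fin r) K | ∃ i : Fin r, k ≤ (i : ℕ) ∧ f = MvPolynomial.X i}) ∧
          m = ∑ g ∈ G, c g • g := by
  classical
  set R := MvPolynomial (Fin r) K with hR
  set A := Algebra.adjoin K {f : R | ∃ i : Fin r, k ≤ (i : ℕ) ∧ f = MvPolynomial.X i} with hAdef
  -- the zeroth local cohomology as a submodule
  let N : Submodule R M :=
    { carrier := {m : M | ∃ n : ℕ, ∀ s ∈ p ^ n, s • m = 0}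
      zero_mem' := ⟨0, fun s _ => smul_zero s⟩
      add_mem' := by
        rintro a b ⟨na, ha⟩ ⟨nb, hb⟩
        refine ⟨max na nb, fun s hs => ?_⟩
        rw [smul_add, ha s (Ideal.pow_le_pow_right (le_max_left _ _) hs),
            hb s (Ideal.pow_le_pow_right (le_max_right _ _) hs), add_zero]
      smul_mem' := by
        rintro c x ⟨n, hn⟩
        refine ⟨n, fun s hs => ?_⟩
        rw [smul_smul]
        exact hn _ (Ideal.mul_mem_right c _ hs) }
  have hfin : IsNoetherian R M := inferInstance
  obtain ⟨T, hT⟩ : N.FG := IsNoetherian.noetherian N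
  -- uniform killing exponent
  have hTN : ∀ g ∈ T, ∃ n : ℕ, ∀ s ∈ p ^ n, s • g = 0 := by
    intro g hg
    have : g ∈ N := hT ▸ Submodule.subset_span hg
    exact this
  choose! f hf using hTN
  obtain ⟨n, hkill⟩ : ∃ n : ℕ, ∀ g ∈ T, ∀ s ∈ p ^ n, s • g = 0 := by
    refine ⟨T.sup f, fun g hg s hs => ?_⟩
    exact hf g hg s (Ideal.pow_le_pow_right (Finset.le_sup hg) hs)
  -- exponent box
  set d : Fin r →₀ ℕ := Finsupp.equivFunOnFinite.symm (fun i => if (i : ℕ) < k then n else 0)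
    with hd
  have hdapp : ∀ i : Fin r, d i = if (i : ℕ) < k then n else 0 := fun i => rfl
  set D : Finset (Fin r →₀ ℕ) := Finset.Iic d with hD
  set G : Finset M :=
    (D ×ˢ T).image (fun q : (Fin r →₀ ℕ) × M => (MvPolynomial.monomial q.1 (1 : K)) • q.2)
    with hG
  -- the candidate "span over the subring" as an AddSubmonoid
  let W : AddSubmonoid M :=
    { carrier := {m : M | ∃ c : M → R, (∀ g, c g ∈ A) ∧ m = ∑ g ∈ G, c g • g}
      zero_mem' := ⟨0, fun g => zero_mem A, by simp⟩
      add_mem' := by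
        rintro a b ⟨c1, h1, e1⟩ ⟨c2, h2, e2⟩
        exact ⟨c1 + c2, fun g => add_mem (h1 g) (h2 g), by
          simp [e1, e2, add_smul, Finset.sum_add_distrib]⟩ }
  have hWsmul : ∀ s : R, s ∈ A → ∀ x ∈ W, s • x ∈ W := by
    rintro s hs x ⟨c, hc, e⟩
    refine ⟨fun g => s * c g, fun g => mul_mem hs (hc g), ?_⟩
    rw [e, Finset.smul_sum]
    exact Finset.sum_congr rfl fun g _ => by simp [smul_smul]
  have hWgen : ∀ g ∈ T, ∀ v ∈ D, (MvPolynomial.monomial v (1 : K)) • g ∈ W := by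
    intro g hg v hv
    set g' : M := (MvPolynomial.monomial v (1 : K)) • g with hg'
    have hg'G : g' ∈ G := Finset.mem_image.mpr ⟨(v, g), Finset.mem_product.mpr ⟨hv, hg⟩, rfl⟩
    refine ⟨fun h => if h = g' then 1 else 0, fun h => by dsimp only; split <;>
      simp [one_mem, zero_mem], ?_⟩
    simp only [ite_smul, one_smul, zero_smul]
    rw [Finset.sum_ite_eq' G g' (fun h => h), if_pos hg'G]
  have hmono : ∀ g ∈ T, ∀ (u : Fin r →₀ ℕ) (a : K), (MvPolynomial.monomial u a : R) • g ∈ W := by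
    intro g hg u a
    by_cases hcase : ∃ i : Fin r, (i : ℕ) < k ∧ n ≤ u i
    · obtain ⟨i, hik, hni⟩ := hcase
      have hXi : (MvPolynomial.X i : R) ∈ p := by
        rw [hpdef]; exact Ideal.subset_span ⟨i, hik, rfl⟩
      have hmem : (MvPolynomial.monomial u a : R) ∈ p ^ n := by
        have he : (MvPolynomial.monomial u a : R)
            = MvPolynomial.monomial (u - Finsupp.single i n) a * (MvPolynomial.X i) ^ n := by
          rw [MvPolynomial.X_pow_eq_monomial, MvPolynomial.monomial_mul, mul_one,
              tsub_add_cancel_of_le (Finsupp.single_le_iff.mpr hni)]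
        rw [he]
        exact Ideal.mul_mem_left _ _ (Ideal.pow_mem_pow hXi n)
      rw [hkill g hg _ hmem]
      exact W.zero_mem
    · push_neg at hcase
      set u1 : Fin r →₀ ℕ := u.filter (fun i : Fin r => (i : ℕ) < k) with hu1
      set u2 : Fin r →₀ ℕ := u.filter (fun i : Fin r => ¬ (i : ℕ) < k) with hu2
      have husum : u1 + u2 = u := Finsupp.filter_pos_add_filter_neg u _
      have hu1D : u1 ∈ D := by
        rw [hD, Finset.mem_Iic]
        intro i
        rw [hdapp i]
        rw [hu1, Finsupp.filter_apply]
        split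
        · next h => exact le_of_lt (hcase i h)
        · exact le_refl 0
      have hu2A : (MvPolynomial.monomial u2 a : R) ∈ A := by
        rw [MvPolynomial.monomial_eq]
        refine mul_mem ?_ ?_
        · rw [← MvPolynomial.algebraMap_eq]
          exact Subalgebra.algebraMap_mem A a
        · refine prod_mem fun i hi => pow_mem (Algebra.subset_adjoin ?_) _
          have hik : k ≤ (i : ℕ) := by
            by_contra hik
            push_neg at hik
            refine (Finsupp.mem_support_iff.mp hi) ?_
            rw [hu2, Finsupp.filter_apply, if_neg]
            simp [hik]
          exact ⟨i, hik, rfl⟩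
      have hsplit : (MvPolynomial.monomial u a : R)
          = MvPolynomial.monomial u2 a * MvPolynomial.monomial u1 1 := by
        rw [MvPolynomial.monomial_mul, mul_one, add_comm, husum]
      rw [hsplit, mul_smul]
      exact hWsmul _ hu2A _ (hWgen g hg u1 hu1D)
  have hpoly : ∀ g ∈ T, ∀ q : R, q • g ∈ W := by
    intro g hg q
    induction q using MvPolynomial.induction_on' with
    | monomial u a => exact hmono g hg u a
    | add p1 p2 ih1 ih2 => rw [add_smul]; exact W.add_mem ih1 ih2
  refine ⟨G, ?_, ?_⟩
  · intro g' hg'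
    obtain ⟨⟨v, g⟩, hq, rfl⟩ := Finset.mem_image.mp hg'
    obtain ⟨hv, hgT⟩ := Finset.mem_product.mp hq
    refine ⟨n, fun s hs => ?_⟩
    rw [smul_smul]
    exact hkill g hgT _ (Ideal.mul_mem_right _ _ hs)
  · intro m hm
    have hmN : m ∈ N := hm
    rw [← hT, Submodule.mem_span_finset] at hmN
    obtain ⟨c0, -, hc0⟩ := hmN
    have : m ∈ W := by
      rw [← hc0]
      exact AddSubmonoid.sum_mem W fun g hg => hpoly g hg (c0 g)
    obtain ⟨c, hc, e⟩ := this
    exact ⟨c, hc, e⟩
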